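/- Let G be a connected infinite graph and (T, (P_t)) a tree-decomposition of G of finite adhesion such that along every ray t₁t₂… of T the adhesion sets W_i = V(P_{t_i}) ∩ V(P_{t_{i+1}}) are pairwise disjoint, nonempty and finite, and every vertex of W_{i+1} is separated from a fixed root vertex v by W_i. Then for every end τ of T there is an end of G living in τ. -/

import Mathlib

namespace Paper

variable {V : Type*} {ι : Type*}

def edgeVerts (X : Set (Sym2 V)) : Set V := {v | ∃ e ∈ X, v ∈ e}

def ecompl (G : SimpleGraph V) (X : Set (Sym2 V)) : Set (Sym2 V) := G.edgeSet \ X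

def bdry (G : SimpleGraph V) (X : Set (Sym2 V)) : Set V :=
  {v | (∃ e ∈ X, v ∈ e) ∧ ∃ e ∈ ecompl G X, v ∈ e}

def Nested (G : SimpleGraph V) (X Y : Set (Sym2 V)) : Prop :=
  X ⊆ Y ∨ ecompl G X ⊆ Y ∨ Y ⊆ X ∨ Y ⊆ ecompl G X

def ReachOutside (G : SimpleGraph V) (S : Set V) (u v : V) : Prop :=
  ∃ p : G.Walk u v, ∀ x ∈ p.support, x ∉ S

def IsCompOutside (G : SimpleGraph V) (S : Set V) (C : Set V) : Prop :=
  ∃ v, v ∉ S ∧ C = {u | ReachOutside G S u v}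

def sEdges (G : SimpleGraph V) (C : Set V) : Set (Sym2 V) :=
  {e | e ∈ G.edgeSet ∧ ∃ v ∈ C, v ∈ e}

def IsRay (G : SimpleGraph V) (f : ℕ → V) : Prop :=
  Function.Injective f ∧ ∀ n, G.Adj (f n) (f (n + 1))

def RayEquiv (G : SimpleGraph V) (f g : ℕ → V) : Prop :=
  ∀ S : Set V, S.Finite → ∃ N, ∀ i ≥ N, ∀ j ≥ N, ReachOutside G S (f i) (g j)

def LivesIn (f : ℕ → V) (X : Set (Sym2 V)) : Prop :=
  ∃ N, ∀ n ≥ N, f n ∈ edgeVerts X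

def Dominates (G : SimpleGraph V) (v : V) (f : ℕ → V) : Prop :=
  ∃ (g : ℕ → ℕ) (p : (k : ℕ) → G.Walk v (f (g k))),
    StrictMono g ∧ (∀ k, (p k).IsPath) ∧
    ∀ k l, k ≠ l → ∀ x, x ∈ (p k).support → x ∈ (p l).support → x = v


def IsTreeDecomp (G : SimpleGraph V) (T : SimpleGraph ι) (P : ι → G.Subgraph) : Prop :=
  T.IsTree ∧
  (∀ v : V, ∃ t, v ∈ (P t).verts) ∧
  (∀ e ∈ G.edgeSet, ∃! t, e ∈ (P t).edgeSet) ∧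
  ∀ (v : V) (t u : ι) (p : T.Walk t u), p.IsPath → v ∈ (P t).verts → v ∈ (P u).verts →
    ∀ w ∈ p.support, v ∈ (P w).verts

def FiniteAdhesion (G : SimpleGraph V) (T : SimpleGraph ι) (P : ι → G.Subgraph) : Prop :=
  ∀ t u, T.Adj t u → ((P t).verts ∩ (P u).verts).Finite

def treeSep (G : SimpleGraph V) (T : SimpleGraph ι) (P : ι → G.Subgraph) (t u : ι) :
    Set (Sym2 V) :=
  {e | ∃ w, ReachOutside T {t} w u ∧ e ∈ (P w).edgeSet}

section KonigAux

open SimpleGraph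


variable {X : ℕ → Type*}

def kdown (σ : ∀ i, X (i+1) → X i) : ∀ j i, i ≤ j → X j → X i
  | 0, _, h, x => cast (congrArg X (Nat.le_zero.mp h).symm) x
  | (j+1), i, h, x =>
    if he : i = j + 1 then cast (congrArg X he.symm) x
    else kdown σ j i (Nat.lt_succ_iff.mp (lt_of_le_of_ne h he)) (σ j x)

lemma kdown_self (σ : ∀ i, X (i+1) → X i) (j : ℕ) (h : j ≤ j) (x : X j) :
    kdown σ j j h x = x := by
  cases j with
  | zero => exact eq_of_heq (cast_heq _ x)
  | succ j => rw [kdown, dif_pos rfl]; exact eq_of_heq (cast_heq _ x)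

lemma kdown_step (σ : ∀ i, X (i+1) → X i) (j i : ℕ) (h : i ≤ j) (h' : i ≤ j + 1) (x : X (j+1)) :
    kdown σ (j+1) i h' x = kdown σ j i h (σ j x) := by
  rw [kdown, dif_neg (by omega)]

lemma kdown_trans (σ : ∀ i, X (i+1) → X i) :
    ∀ (k j i : ℕ) (hij : i ≤ j) (hjk : j ≤ k) (x : X k),
    kdown σ k i (hij.trans hjk) x = kdown σ j i hij (kdown σ k j hjk x) := by
  intro k
  induction k with
  | zero =>
    intro j i hij hjk x
    have hj : j = 0 := Nat.le_zero.mp hjk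
    subst hj
    have hi : i = 0 := Nat.le_zero.mp hij
    subst hi
    simp only [kdown_self]
  | succ k ih =>
    intro j i hij hjk x
    rcases Nat.eq_or_lt_of_le hjk with he | hlt
    · subst he
      rw [kdown_self]
    · have hjk' : j ≤ k := Nat.lt_succ_iff.mp hlt
      have hik : i ≤ k := hij.trans hjk'
      rw [kdown_step σ k i hik, kdown_step σ k j hjk', ih j i hij hjk' (σ k x)]

lemma konig [∀ i, Finite (X i)] [∀ i, Nonempty (X i)] (σ : ∀ i, X (i+1) → X i) :
    ∃ f : ∀ i, X i, ∀ i, σ i (f (i+1)) = f i := by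
  classical
  set Good : ∀ i, X i → Prop := fun i x => ∀ j (h : i ≤ j), ∃ y : X j, kdown σ j i h y = x with hGood
  -- helper to find an element with infinitely many preimage levels
  have exinf : ∀ (i : ℕ) (A : ∀ j, Set (X j)) , (∀ j, i ≤ j → (A j).Nonempty) →
      ∃ x : X i, ∀ j, ∃ (j' : ℕ) (h : i ≤ j'), j ≤ j' ∧ ∃ y ∈ A j', kdown σ j' i h y = x := by
    intro i A hA
    choose y hy using fun j : ℕ => hA (j + i) (Nat.le_add_left _ _)
    have : ∃ x : X i, {j | kdown σ (j+i) i (Nat.le_add_left _ _) (y j) = x}.Infinite := by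
      obtain ⟨x, hx⟩ := Finite.exists_infinite_fiber
        (fun j : ℕ => kdown σ (j+i) i (Nat.le_add_left _ _) (y j))
      exact ⟨x, Set.infinite_coe_iff.mp hx⟩
    obtain ⟨x, hx⟩ := this
    refine ⟨x, fun j => ?_⟩
    obtain ⟨j', hj'mem, hj'gt⟩ := hx.exists_gt j
    exact ⟨j' + i, Nat.le_add_left _ _, by omega, y j', hy j', hj'mem⟩
  have sig : ∀ (k i : ℕ) (h : i + 1 ≤ k) (y : X k),
      σ i (kdown σ k (i+1) h y) = kdown σ k i ((Nat.le_succ i).trans h) y := by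
    intro k i h y
    have h1 : kdown σ (i+1) i (Nat.le_succ i) (kdown σ k (i+1) h y)
        = σ i (kdown σ k (i+1) h y) := by
      rw [kdown_step σ i i le_rfl, kdown_self]
    rw [← h1]
    have := kdown_trans σ k (i+1) i (Nat.le_succ i) h y
    rw [← this]
  have base : ∃ x : X 0, Good 0 x := by
    obtain ⟨x, hx⟩ := exinf 0 (fun j => Set.univ) (fun j _ => Set.univ_nonempty)
    refine ⟨x, fun j h => ?_⟩
    obtain ⟨j', h', hjj', y, -, hk⟩ := hx j
    refine ⟨kdown σ j' j hjj' y, ?_⟩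
    rw [← kdown_trans σ j' j 0 (Nat.zero_le _) hjj' y]
    exact hk
  have step : ∀ i (x : X i), Good i x → ∃ x' : X (i+1), σ i x' = x ∧ Good (i+1) x' := by
    intro i x hx
    set A : ∀ j, Set (X j) := fun j => {y : X j | ∀ h : i ≤ j, kdown σ j i h y = x} with hA
    have hAne : ∀ j, i + 1 ≤ j → (A j).Nonempty := by
      intro j hj
      obtain ⟨y, hy⟩ := hx j ((Nat.le_succ i).trans hj)
      exact ⟨y, fun h => hy⟩
    obtain ⟨x', hx'⟩ := exinf (i+1) A hAne
    have hσ : σ i x' = x := by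
      obtain ⟨j', h', hjj', y, hyA, hk⟩ := hx' (i+1)
      rw [← hk, sig j' i h' y]
      exact hyA ((Nat.le_succ i).trans h')
    refine ⟨x', hσ, fun j h => ?_⟩
    obtain ⟨j', h', hjj', y, hyA, hk⟩ := hx' j
    refine ⟨kdown σ j' j hjj' y, ?_⟩
    rw [← kdown_trans σ j' j (i+1) h hjj' y]
    exact hk
  let g : ∀ i, {x : X i // Good i x} := fun i => Nat.rec ⟨base.choose, base.choose_spec⟩
    (fun i p => ⟨(step i p.1 p.2).choose, (step i p.1 p.2).choose_spec.2⟩) i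
  exact ⟨fun i => (g i).1, fun i => (step i (g i).1 (g i).2).choose_spec.1⟩


end KonigAux

open SimpleGraph


open SimpleGraph


def Far (T : SimpleGraph ι) (t : ℕ → ι) (m : ℕ) (w : ι) : Prop :=
  ReachOutside T {t m} w (t (m+1))

lemma wthru {T : SimpleGraph ι} (hac : T.IsAcyclic) {a b c : ι} (p q : T.Walk a b)
    (hp : p.IsPath) (hc : c ∈ p.support) : c ∈ q.support := by
  classical
  have h := hac.path_unique ⟨p, hp⟩ ⟨q.bypass, q.bypass_isPath⟩
  have hpq : p = q.bypass := congrArg Subtype.val h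
  exact q.support_bypass_subset (hpq ▸ hc)

def rayWalk (T : SimpleGraph ι) (t : ℕ → ι) (h : ∀ n, T.Adj (t n) (t (n+1))) :
    ∀ (a k : ℕ), T.Walk (t a) (t (a+k))
  | _, 0 => Walk.nil
  | a, (k+1) => (rayWalk T t h a k).concat (h (a+k))

lemma rayWalk_support (T : SimpleGraph ι) (t : ℕ → ι) (h : ∀ n, T.Adj (t n) (t (n+1)))
    (a k : ℕ) : (rayWalk T t h a k).support = (List.range (k+1)).map (fun j => t (a+j)) := by
  induction k with
  | zero => simp [rayWalk, List.range_succ]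
  | succ k ih =>
    rw [rayWalk, Walk.support_concat, ih]
    simp [List.range_succ]

lemma rayWalk_isPath (T : SimpleGraph ι) (t : ℕ → ι) (htinj : Function.Injective t)
    (h : ∀ n, T.Adj (t n) (t (n+1))) (a k : ℕ) : (rayWalk T t h a k).IsPath := by
  rw [Walk.isPath_def, rayWalk_support]
  refine List.Nodup.map ?_ List.nodup_range
  intro x y hxy
  have := htinj hxy
  omega

lemma rayThru {T : SimpleGraph ι} (hT : T.IsTree) {t : ℕ → ι}
    (htinj : Function.Injective t) (htadj : ∀ n, T.Adj (t n) (t (n+1)))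
    (a k j : ℕ) (hj : j ≤ k) (q : T.Walk (t a) (t (a+k))) : t (a+j) ∈ q.support := by
  refine wthru hT.IsAcyclic (rayWalk T t htadj a k) q
    (rayWalk_isPath T t htinj htadj a k) ?_
  rw [rayWalk_support]
  simp only [List.mem_map, List.mem_range]
  exact ⟨j, by omega, rfl⟩

lemma far_mono {T : SimpleGraph ι} (hT : T.IsTree) {t : ℕ → ι}
    (htinj : Function.Injective t) (htadj : ∀ n, T.Adj (t n) (t (n+1)))
    {m : ℕ} {w : ι} (h : Far T t (m+1) w) : Far T t m w := by
  classical
  obtain ⟨p, hp⟩ := h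
  have hm : t m ∉ p.support := by
    intro hmem
    have h1 : t (m+1) ∈ (p.dropUntil (t m) hmem).support := by
      have := rayThru hT htinj htadj m 2 1 (by omega)
        ((p.dropUntil (t m) hmem).copy rfl (congrArg t (show m+1+1 = m+2 by omega)))
      rw [Walk.support_copy] at this
      exact this
    exact hp _ (Walk.support_dropUntil_subset p hmem h1) rfl
  refine ⟨p.append (Walk.cons (htadj (m+1)).symm Walk.nil), ?_⟩
  intro x hx
  rw [Walk.mem_support_append_iff] at hx
  rcases hx with hx | hx
  · intro hc
    rw [Set.mem_singleton_iff] at hc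
    exact hm (hc ▸ hx)
  · simp only [Walk.support_cons, Walk.support_nil, List.mem_cons, List.mem_singleton,
      List.not_mem_nil, or_false] at hx
    simp only [Set.mem_singleton_iff]
    rcases hx with rfl | rfl
    · intro hc; exact (by omega : m + 1 + 1 ≠ m) (htinj hc)
    · intro hc; exact (by omega : m + 1 ≠ m) (htinj hc)

lemma far_le {T : SimpleGraph ι} (hT : T.IsTree) {t : ℕ → ι}
    (htinj : Function.Injective t) (htadj : ∀ n, T.Adj (t n) (t (n+1)))
    {n i : ℕ} (hni : n ≤ i) {w : ι} (h : Far T t i w) : Far T t n w := by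
  induction i with
  | zero => exact (Nat.le_zero.mp hni) ▸ h
  | succ i ih =>
    rcases Nat.eq_or_lt_of_le hni with rfl | hlt
    · exact h
    · exact ih (by omega) (far_mono hT htinj htadj h)

lemma near_eventually {T : SimpleGraph ι} (hT : T.IsTree) {t : ℕ → ι}
    (htinj : Function.Injective t) (htadj : ∀ n, T.Adj (t n) (t (n+1))) (w : ι) :
    ∃ I, ∀ i, I ≤ i → ¬ Far T t i w := by
  by_cases h : ∃ i, ¬ Far T t i w
  · obtain ⟨I, hI⟩ := h
    exact ⟨I, fun i hi hf => hI (far_le hT htinj htadj hi hf)⟩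
  · push_neg at h
    exfalso
    have pw : T.Walk (t 0) w := (hT.isConnected.preconnected (t 0) w).some
    have hmem : ∀ i : ℕ, t (i+1) ∈ pw.support := by
      intro i
      obtain ⟨r, hr⟩ := h (i+1)
      have hq : t (i+1) ∈ (pw.append r).support := by
        have := rayThru hT htinj htadj 0 (i+2) (i+1) (by omega)
          ((pw.append r).copy (congrArg t (show 0 = 0+0 by omega)).symm
            (congrArg t (show 0+(i+2) = i+1+1 by omega)).symm)
        rw [Walk.support_copy, show (0:ℕ)+(i+1) = i+1 by omega] at this
        exact this
      rw [Walk.mem_support_append_iff] at hq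
      rcases hq with hq | hq
      · exact hq
      · exact absurd rfl (hr _ hq)
    exact (List.finite_toSet pw.support).not_infinite
      (Set.infinite_of_injective_forall_mem
        (f := fun i : ℕ => t (i+1)) (fun a b hab => by have := htinj hab; omega) hmem)

variable {G : SimpleGraph V} {T : SimpleGraph ι} {P : ι → G.Subgraph} {t : ℕ → ι}

lemma twopart (hT : T.IsTree) (htinj : Function.Injective t)
    (htadj : ∀ n, T.Adj (t n) (t (n+1)))
    (htd4 : ∀ (u : V) (a b : ι) (p : T.Walk a b), p.IsPath → u ∈ (P a).verts →
      u ∈ (P b).verts → ∀ w ∈ p.support, u ∈ (P w).verts)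
    {u : V} {a b : ι} {m : ℕ} (ha : u ∈ (P a).verts) (hb : u ∈ (P b).verts)
    (hna : ¬ Far T t m a) (hfb : Far T t m b) :
    u ∈ (P (t m)).verts ∧ u ∈ (P (t (m+1))).verts := by
  classical
  obtain ⟨rb, hrb⟩ := hfb
  have p : T.Walk a b := (hT.isConnected.preconnected a b).some
  have htm : t m ∈ p.bypass.support := by
    by_contra hmem
    refine hna ⟨p.bypass.append rb, ?_⟩
    intro x hx
    rw [Walk.mem_support_append_iff] at hx
    rcases hx with hx | hx
    · simp only [Set.mem_singleton_iff]; rintro rfl; exact hmem hx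
    · exact hrb x hx
  have hu1 : u ∈ (P (t m)).verts := htd4 u a b p.bypass p.bypass_isPath ha hb _ htm
  -- second part
  have hnb : t m ∉ rb.bypass.support := fun hc =>
    hrb _ (rb.support_bypass_subset hc) rfl
  have hpath : (rb.bypass.concat (htadj m).symm).IsPath := by
    rw [Walk.isPath_def, Walk.support_concat]
    rw [List.nodup_append]
    refine ⟨rb.bypass_isPath.support_nodup, List.nodup_singleton _, ?_⟩
    intro x hx y hy hxy
    rw [List.mem_singleton] at hy
    subst hy hxy
    exact hnb hx
  have hmem2 : t (m+1) ∈ (rb.bypass.concat (htadj m).symm).support := by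
    rw [Walk.support_concat, List.mem_append]
    exact Or.inl rb.bypass.end_mem_support
  have hu2 : u ∈ (P (t (m+1))).verts :=
    htd4 u b (t m) (rb.bypass.concat (htadj m).symm) hpath hb hu1 _ hmem2
  exact ⟨hu1, hu2⟩

lemma crossing (hT : T.IsTree) (htinj : Function.Injective t)
    (htadj : ∀ n, T.Adj (t n) (t (n+1)))
    (htd3 : ∀ e ∈ G.edgeSet, ∃! s, e ∈ (P s).edgeSet)
    (htd4 : ∀ (u : V) (a b : ι) (p : T.Walk a b), p.IsPath → u ∈ (P a).verts →
      u ∈ (P b).verts → ∀ w ∈ p.support, u ∈ (P w).verts)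
    {m : ℕ} : ∀ {c d : V} (p : G.Walk c d),
    (∃ a, c ∈ (P a).verts ∧ ¬ Far T t m a) → (∃ b, d ∈ (P b).verts ∧ Far T t m b) →
    ∃ z ∈ p.support, z ∈ (P (t m)).verts ∧ z ∈ (P (t (m+1))).verts := by
  intro c d p
  induction p with
  | nil =>
    intro hc hd
    obtain ⟨a, ha, hna⟩ := hc
    obtain ⟨b, hb, hfb⟩ := hd
    exact ⟨_, Walk.start_mem_support _, twopart hT htinj htadj htd4 ha hb hna hfb⟩
  | @cons c c₂ d h p ih =>
    intro hc hd
    have he : s(c, c₂) ∈ G.edgeSet := h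
    obtain ⟨w', hw', -⟩ := htd3 _ he
    have hP : (P w').Adj c c₂ := (SimpleGraph.Subgraph.mem_edgeSet).mp hw'
    by_cases hfar : Far T t m w'
    · obtain ⟨a, ha, hna⟩ := hc
      exact ⟨c, by simp, twopart hT htinj htadj htd4 ha hP.fst_mem hna hfar⟩
    · obtain ⟨z, hz, hz2⟩ := ih ⟨w', hP.snd_mem, hfar⟩ hd
      exact ⟨z, by simp [hz], hz2⟩

lemma edges_far (hT : T.IsTree) (htinj : Function.Injective t)
    (htadj : ∀ n, T.Adj (t n) (t (n+1)))
    (htd3 : ∀ e ∈ G.edgeSet, ∃! s, e ∈ (P s).edgeSet)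
    (htd4 : ∀ (u : V) (a b : ι) (p : T.Walk a b), p.IsPath → u ∈ (P a).verts →
      u ∈ (P b).verts → ∀ w ∈ p.support, u ∈ (P w).verts)
    {m : ℕ} : ∀ {y x : V} (p : G.Walk y x), p.IsPath →
    (∃ b, x ∈ (P b).verts ∧ Far T t m b) →
    (∀ c ∈ p.support, (c ∈ (P (t m)).verts ∧ c ∈ (P (t (m+1))).verts) → c = y) →
    ∀ e ∈ p.edges, ∃ w, Far T t m w ∧ e ∈ (P w).edgeSet := by
  intro y x p
  induction p with
  | nil => intro _ _ _ e he; simp at he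
  | @cons y y₂ x h p ih =>
    intro hp hx hyp e he
    have hy2 : y ∉ p.support := by
      have := hp.support_nodup
      rw [Walk.support_cons, List.nodup_cons] at this
      exact this.1
    have hhead : ∃ w, Far T t m w ∧ s(y, y₂) ∈ (P w).edgeSet := by
      have he' : s(y, y₂) ∈ G.edgeSet := h
      obtain ⟨w', hw', -⟩ := htd3 _ he'
      have hPadj : (P w').Adj y y₂ := (SimpleGraph.Subgraph.mem_edgeSet).mp hw'
      by_cases hfar : Far T t m w'
      · exact ⟨w', hfar, hw'⟩
      · exfalso
        obtain ⟨z, hz, hz2⟩ := crossing hT htinj htadj htd3 htd4 p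
          ⟨w', hPadj.snd_mem, hfar⟩ hx
        have := hyp z (by simp [hz]) hz2
        subst this
        exact hy2 hz
    rw [Walk.edges_cons, List.mem_cons] at he
    rcases he with rfl | he
    · exact hhead
    · refine ih hp.of_cons hx ?_ e he
      intro c hc hc2
      exfalso
      have := hyp c (by simp [hc]) hc2
      subst this
      exact hy2 hc

lemma first_hit {S : Set V} : ∀ {a b : V} (r : G.Walk a b), (∃ c ∈ r.support, c ∈ S) →
    ∃ y ∈ S, ∃ r₁ : G.Walk a y, ∀ c ∈ r₁.support, c ∈ S → c = y := by
  intro a b r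
  induction r with
  | nil =>
    intro hc
    obtain ⟨c, hc1, hc2⟩ := hc
    simp only [Walk.support_nil, List.mem_singleton] at hc1
    subst hc1
    exact ⟨c, hc2, Walk.nil, by simp⟩
  | @cons a a₂ b h r ih =>
    intro hc
    by_cases ha : a ∈ S
    · exact ⟨a, ha, Walk.nil, by simp⟩
    · obtain ⟨c, hc1, hc2⟩ := hc
      rw [Walk.support_cons, List.mem_cons] at hc1
      rcases hc1 with rfl | hc1
      · exact absurd hc2 ha
      · obtain ⟨y, hy, r₁, hr₁⟩ := ih ⟨c, hc1, hc2⟩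
        refine ⟨y, hy, Walk.cons h r₁, ?_⟩
        intro z hz hzS
        rw [Walk.support_cons, List.mem_cons] at hz
        rcases hz with rfl | hz
        · exact absurd hzS ha
        · exact hr₁ z hz hzS

lemma support_mem_edge : ∀ {a b : V} (p : G.Walk a b), 0 < p.length →
    ∀ c ∈ p.support, ∃ e ∈ p.edges, c ∈ e := by
  intro a b p
  induction p with
  | nil => intro h; simp at h
  | @cons a a₂ b h p ih =>
    intro _ c hc
    rw [Walk.support_cons, List.mem_cons] at hc
    rcases hc with rfl | hc
    · exact ⟨s(c, a₂), by simp, Sym2.mem_mk_left _ _⟩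
    · cases p with
      | nil =>
        simp only [Walk.support_nil, List.mem_singleton] at hc
        subst hc
        exact ⟨s(a, c), by simp, Sym2.mem_mk_right _ _⟩
      | cons h' p' =>
        obtain ⟨e, he, hce⟩ := ih (by simp) c hc
        exact ⟨e, by rw [Walk.edges_cons]; exact List.mem_cons_of_mem _ he, hce⟩

lemma edge_getVert : ∀ {a b : V} (p : G.Walk a b) (n : ℕ), n < p.length →
    s(p.getVert n, p.getVert (n+1)) ∈ p.edges := by
  intro a b p
  induction p with
  | nil => intro n hn; simp at hn
  | @cons a a₂ b h p ih =>
    intro n hn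
    cases n with
    | zero =>
      rw [Walk.edges_cons, List.mem_cons]
      left
      rw [Walk.getVert_zero, Walk.getVert_cons_succ, Walk.getVert_zero]
    | succ n =>
      rw [Walk.getVert_cons_succ, Walk.getVert_cons_succ, Walk.edges_cons, List.mem_cons]
      right
      exact ih n (by simpa [Walk.length_cons, Nat.succ_lt_succ_iff] using hn)


lemma mem_verts_of_edge {G : SimpleGraph V} {H : G.Subgraph} {e : Sym2 V} (he : e ∈ H.edgeSet)
    {u : V} (hu : u ∈ e) : u ∈ H.verts := by
  induction e using Sym2.ind with
  | _ a b =>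
    rw [SimpleGraph.Subgraph.mem_edgeSet] at he
    rcases Sym2.mem_iff.mp hu with rfl | rfl
    · exact he.fst_mem
    · exact he.snd_mem



theorem stmt15 (G : SimpleGraph V) (T : SimpleGraph ι) (P : ι → G.Subgraph)
    (hconn : G.Connected) (hinf : Infinite V)
    (htd : IsTreeDecomp G T P) (hadh : FiniteAdhesion G T P)
    (v : V)
    (t : ℕ → ι) (ht : IsRay T t)
    (W : ℕ → Set V) (hW : ∀ i, W i = (P (t i)).verts ∩ (P (t (i + 1))).verts)
    (hWfin : ∀ i, (W i).Finite) (hWne : ∀ i, (W i).Nonempty)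
    (hWdisj : ∀ i j, i ≠ j → Disjoint (W i) (W j))
    (hsep : ∀ i : ℕ, ∀ x ∈ W (i + 1), ∀ p : G.Walk v x, ∃ y ∈ p.support, y ∈ W i) :
    ∃ f : ℕ → V, IsRay G f ∧ ∀ n, LivesIn f (treeSep G T P (t n) (t (n + 1))) := by
  classical
  obtain ⟨hT, htd2, htd3, htd4⟩ := htd
  obtain ⟨htinj, htadj⟩ := ht
  -- step 1 : segments
  have key : ∀ (i : ℕ) (x : V), x ∈ W (i+1) → ∃ y, y ∈ W i ∧ ∃ sg : G.Walk y x,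
      sg.IsPath ∧ 0 < sg.length ∧ ∀ e ∈ sg.edges, ∃ w, Far T t i w ∧ e ∈ (P w).edgeSet := by
    intro i x hx
    obtain ⟨q⟩ := hconn.preconnected v x
    have hhit : ∃ c ∈ q.reverse.support, c ∈ W i := by
      obtain ⟨y, hy1, hy2⟩ := hsep i x hx q
      exact ⟨y, by rw [Walk.support_reverse, List.mem_reverse]; exact hy1, hy2⟩
    obtain ⟨y, hyW, r₁, hr₁⟩ := first_hit q.reverse hhit
    refine ⟨y, hyW, r₁.reverse.bypass, r₁.reverse.bypass_isPath, ?_, ?_⟩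
    · rcases Nat.eq_zero_or_pos r₁.reverse.bypass.length with h0 | h0
      · exfalso
        have : y = x := Walk.eq_of_length_eq_zero h0
        subst this
        exact Set.disjoint_left.mp (hWdisj i (i+1) (by omega)) hyW hx
      · exact h0
    · have hsupp : ∀ c ∈ r₁.reverse.bypass.support, c ∈ W i → c = y := by
        intro c hc hcW
        have h1 := r₁.reverse.support_bypass_subset hc
        rw [Walk.support_reverse, List.mem_reverse] at h1
        exact hr₁ c h1 hcW
      refine edges_far hT htinj htadj htd3 htd4 _ r₁.reverse.bypass_isPath
        ⟨t (i+1), ?_, ⟨Walk.nil, ?_⟩⟩ ?_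
      · have := hW (i+1) ▸ hx
        exact this.1
      · intro z hz
        simp only [Walk.support_nil, List.mem_singleton] at hz
        subst hz
        simp only [Set.mem_singleton_iff]
        intro hc
        exact (by omega : i + 1 ≠ i) (htinj hc)
      · intro c hc hc2
        exact hsupp c hc (by rw [hW i]; exact ⟨hc2.1, hc2.2⟩)
  -- step 2 : koenig
  haveI hXfin : ∀ i, Finite (W i) := fun i => (hWfin i).to_subtype
  haveI hXne : ∀ i, Nonempty (W i) := fun i => (hWne i).to_subtype
  set σ : ∀ i : ℕ, W (i+1) → W i := fun i x =>
    ⟨(key i x.1 x.2).choose, (key i x.1 x.2).choose_spec.1⟩ with hσ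
  obtain ⟨ff, hff⟩ := konig (X := fun i => W i) σ
  have main : ∃ (xx : ℕ → V) (s : ∀ i, G.Walk (xx i) (xx (i+1))),
      (∀ i, (s i).IsPath) ∧ (∀ i, 0 < (s i).length) ∧
      (∀ i, ∀ e ∈ (s i).edges, ∃ w, Far T t i w ∧ e ∈ (P w).edgeSet) := by
    refine ⟨fun i => (ff i).1, fun i => ?_, fun i => ?_, fun i => ?_, fun i => ?_⟩
    · have heq : (key i (ff (i+1)).1 (ff (i+1)).2).choose = (ff i).1 := by
        have := hff i
        rw [hσ] at this
        exact congrArg Subtype.val this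
      exact ((key i (ff (i+1)).1 (ff (i+1)).2).choose_spec.2.choose).copy heq rfl
    · beta_reduce
      rw [Walk.isPath_copy]
      exact (key i (ff (i+1)).1 (ff (i+1)).2).choose_spec.2.choose_spec.1
    · beta_reduce
      rw [Walk.length_copy]
      exact (key i (ff (i+1)).1 (ff (i+1)).2).choose_spec.2.choose_spec.2.1
    · beta_reduce
      intro e he
      rw [Walk.edges_copy] at he
      exact (key i (ff (i+1)).1 (ff (i+1)).2).choose_spec.2.choose_spec.2.2 e he
  clear hff
  obtain ⟨xx, s, hsPath, hsLen, hsEdge⟩ := main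
  -- offsets
  let o : ℕ → ℕ := fun i => Nat.rec 0 (fun i acc => acc + (s i).length) i
  have ho0 : o 0 = 0 := rfl
  have hoS : ∀ i, o (i+1) = o i + (s i).length := fun i => rfl
  have hoLt : ∀ i, o i < o (i+1) := fun i => by rw [hoS]; have := hsLen i; omega
  have hoMono : StrictMono o := strictMono_nat_of_lt_succ hoLt
  have hoGe : ∀ i, i ≤ o i := by
    intro i
    induction i with
    | zero => exact Nat.zero_le _
    | succ i ih => have := hoLt i; omega
  let q : ∀ i, G.Walk (xx 0) (xx (i+1)) :=
    fun i => Nat.rec (motive := fun i => G.Walk (xx 0) (xx (i+1))) (s 0)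
      (fun i acc => acc.append (s (i+1))) i
  have hqS : ∀ i, q (i+1) = (q i).append (s (i+1)) := fun i => rfl
  have hqlen : ∀ i, (q i).length = o (i+1) := by
    intro i
    induction i with
    | zero =>
      show (s 0).length = o 0 + (s 0).length
      rw [ho0]; omega
    | succ i ih => rw [hqS, Walk.length_append, ih, hoS]
  let g : ℕ → V := fun n => (q n).getVert n
  have ST : ∀ (j mm k : ℕ), k ≤ o (mm+1) → (q (mm+j)).getVert k = (q mm).getVert k := by
    intro j
    induction j with
    | zero => intro mm k h; rfl
    | succ j ih =>
      intro mm k h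
      rw [show mm + (j+1) = (mm+j)+1 from rfl, hqS, Walk.getVert_append]
      by_cases hk : k < (q (mm+j)).length
      · rw [if_pos hk]; exact ih mm k h
      · rw [if_neg hk]
        rw [hqlen] at hk
        have h2 : o (mm+1) ≤ o (mm+j+1) := hoMono.monotone (show mm+1 ≤ mm+j+1 by omega)
        have hk2 : k = o (mm+j+1) := by omega
        have hj0 : mm + 1 = mm + j + 1 := hoMono.injective (by omega)
        have hj : j = 0 := by omega
        subst hj
        have hk3 : k = (q mm).length := by rw [hqlen]; omega
        rw [hk3]
        show (s (mm+1)).getVert ((q mm).length - (q mm).length) = (q mm).getVert (q mm).length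
        rw [Nat.sub_self, Walk.getVert_zero, Walk.getVert_length]
  have GPOS : ∀ i k, o i ≤ k → k ≤ o (i+1) → g k = (s i).getVert (k - o i) := by
    intro i k h1 h2
    have hik : i ≤ k := le_trans (hoGe i) h1
    have hgq : g k = (q i).getVert k := by
      show (q k).getVert k = (q i).getVert k
      have h3 := ST (k - i) i k h2
      rw [show i + (k-i) = k by omega] at h3
      exact h3
    rw [hgq]
    cases i with
    | zero =>
      show (s 0).getVert k = (s 0).getVert (k - o 0)
      rw [ho0, Nat.sub_zero]
    | succ i =>
      rw [hqS, Walk.getVert_append, if_neg (by rw [hqlen]; omega), hqlen]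
  have SEG : ∀ k, ∃ i, o i ≤ k ∧ k < o (i+1) := by
    intro k
    induction k with
    | zero => exact ⟨0, by omega, by have := hoLt 0; omega⟩
    | succ k ih =>
      obtain ⟨i, h1, h2⟩ := ih
      by_cases h3 : k + 1 < o (i+1)
      · exact ⟨i, by omega, h3⟩
      · exact ⟨i+1, by omega, by have := hoLt (i+1); omega⟩
  have ADJ : ∀ k, G.Adj (g k) (g (k+1)) := by
    intro k
    obtain ⟨i, h1, h2⟩ := SEG k
    have e1 := GPOS i k h1 (by omega)
    have e2 := GPOS i (k+1) (by omega) (by omega)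
    rw [e1, e2, show k + 1 - o i = (k - o i) + 1 by omega]
    exact (s i).adj_getVert_succ (by have := hoS i; omega)
  have GE : ∀ n k, o (n+1) ≤ k → g k ∈ edgeVerts (treeSep G T P (t n) (t (n+1))) := by
    intro n k hk
    obtain ⟨i, h1, h2⟩ := SEG k
    have hni : n + 1 ≤ i := by
      by_contra hcon
      have h4 : i + 1 ≤ n + 1 := by omega
      have h5 : o (i+1) ≤ o (n+1) := hoMono.monotone h4
      omega
    have hlt : k - o i < (s i).length := by have := hoS i; omega
    have he := edge_getVert (s i) (k - o i) hlt
    obtain ⟨w, hwFar, hwE⟩ := hsEdge i _ he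
    refine ⟨_, ⟨w, far_le hT htinj htadj (by omega : n ≤ i) hwFar, hwE⟩, ?_⟩
    rw [GPOS i k h1 (by omega)]
    exact Sym2.mem_mk_left _ _
  have OCC : ∀ u : V, ∃ K, ∀ k, g k = u → k < o K := by
    intro u
    obtain ⟨wu, hwu⟩ := htd2 u
    obtain ⟨I, hI⟩ := near_eventually hT htinj htadj wu
    have hseg : ∀ i, I ≤ i → u ∈ (s i).support → u ∈ W i := by
      intro i hIi hu
      obtain ⟨e, heE, heU⟩ := support_mem_edge (s i) (hsLen i) u hu
      obtain ⟨w, hwFar, hwE⟩ := hsEdge i e heE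
      have huP : u ∈ (P w).verts := mem_verts_of_edge hwE heU
      have h6 := twopart hT htinj htadj htd4 hwu huP (hI i hIi) hwFar
      rw [hW i]
      exact ⟨h6.1, h6.2⟩
    have hKex : ∃ K, ∀ i, u ∈ (s i).support → i < K := by
      by_cases hex : ∃ i, I ≤ i ∧ u ∈ (s i).support
      · obtain ⟨i₀, hi₀1, hi₀2⟩ := hex
        refine ⟨max I (i₀+1), fun i hi => ?_⟩
        by_cases hIle : I ≤ i
        · have h1 := hseg i hIle hi
          have h2 := hseg i₀ hi₀1 hi₀2
          have hii : i = i₀ := by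
            by_contra hne
            exact Set.disjoint_left.mp (hWdisj i i₀ hne) h1 h2
          omega
        · omega
      · push_neg at hex
        exact ⟨I, fun i hi => by by_contra h; exact hex i (by omega) hi⟩
    obtain ⟨K, hK⟩ := hKex
    refine ⟨K+1, fun k hk => ?_⟩
    obtain ⟨i, h1, h2⟩ := SEG k
    have hmem : g k ∈ (s i).support := by
      rw [GPOS i k h1 (by omega)]
      rw [Walk.mem_support_iff_exists_getVert]
      exact ⟨k - o i, rfl, by have := hoS i; omega⟩
    have h7 := hK i (hk ▸ hmem)
    have h8 : o (i+1) ≤ o (K+1) := hoMono.monotone (show i+1 ≤ K+1 by omega)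
    omega
  have OCCfin : ∀ n : ℕ, {k | g k = g n}.Finite := by
    intro n
    obtain ⟨K, hK⟩ := OCC (g n)
    exact (Set.finite_Iio (o K)).subset (fun k hk => hK k hk)
  have hLmem : ∀ n, g (sSup {k | g k = g n}) = g n := by
    intro n
    have h11 : sSup {k | g k = g n} ∈ {k | g k = g n} :=
      Nat.sSup_mem ⟨n, show g n = g n from rfl⟩ (OCCfin n).bddAbove
    exact h11
  have hLge : ∀ n, n ≤ sSup {k | g k = g n} := by
    intro n
    exact le_csSup (OCCfin n).bddAbove (show g n = g n from rfl)
  let m : ℕ → ℕ := fun k => Nat.rec 0 (fun _ acc => sSup {j | g j = g acc} + 1) k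
  have hmS : ∀ k, m (k+1) = sSup {j | g j = g (m k)} + 1 := fun k => rfl
  have hmGe : ∀ k, k ≤ m k := by
    intro k
    induction k with
    | zero => exact Nat.zero_le _
    | succ k ih => have := hLge (m k); rw [hmS]; omega
  have hadj : ∀ k, G.Adj (g (m k)) (g (m (k+1))) := by
    intro k
    rw [hmS]
    have h9 := ADJ (sSup {j | g j = g (m k)})
    rw [hLmem (m k)] at h9
    exact h9
  have hL : StrictMono (fun k => sSup {j | g j = g (m k)}) := by
    apply strictMono_nat_of_lt_succ
    intro k
    have h1 := hLge (m (k+1))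
    have h2 : sSup {j | g j = g (m k)} < m (k+1) := by rw [hmS]; omega
    exact lt_of_lt_of_le h2 h1
  refine ⟨fun k => g (m k), ⟨?_, hadj⟩, ?_⟩
  · intro a b hab
    have hab' : g (m a) = g (m b) := hab
    have h10 : sSup {j | g j = g (m a)} = sSup {j | g j = g (m b)} := by rw [hab']
    exact hL.injective h10
  · intro n
    exact ⟨o (n+1), fun k hk => GE n (m k) (le_trans hk (hmGe k))⟩


end Paper
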